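/- Define w_1 = a, w_2 = b, w_3 = ba, w_4 = baabbaa, and w_n = b·TM_{2n-8}·complement(TM_{2n-6})·complement(TM_{2n-6})' for n ≥ 5. Then for every n ≥ 5, w_{n+1} = (baa)^{-1}·τ²(w_n)·baa, i.e., τ²(w_n) has baa as a prefix and removing that prefix and appending baa gives w_{n+1}. -/

import Mathlib

/-- Alphabet {a,b} with a = false, b = true, a < b. -/
abbrev Letter := Bool

/-- Lexicographic order (proper prefixes are smaller). -/
def lexlt (x y : List Bool) : Prop := List.Lex (· < ·) x y

/-- Fibonacci words: F 0 = b, F 1 = a, F (k+2) = F (k+1) ++ F k. -/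
def Fib : ℕ → List Bool
  | 0 => [true]
  | 1 => [false]
  | (k+2) => Fib (k+1) ++ Fib k

/-- bitwise complement -/
def comp (w : List Bool) : List Bool := w.map (fun c => !c)

/-- Thue-Morse words: TM 0 = a, TM (k+1) = TM k ++ comp (TM k). -/
def TM : ℕ → List Bool
  | 0 => [false]
  | (k+1) => TM k ++ comp (TM k)

/-- Fueled Nyldon predicate: a string of length 1 is Nyldon; a longer string is
Nyldon iff it admits no factorization into ≥ 2 Nyldon words in lexicographically
non-decreasing order. -/
def NyldonAux : ℕ → List Bool → Prop
  | 0, _ => False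
  | (n+1), w =>
    w.length = 1 ∨ (1 < w.length ∧
      ¬ ∃ fs : List (List Bool), 2 ≤ fs.length ∧ fs.flatten = w ∧
        fs.Chain' lexlt ∧ ∀ u ∈ fs, NyldonAux n u)

def Nyldon (w : List Bool) : Prop := NyldonAux w.length w

/-- H k = Fib k with its first letter removed. -/
def H (k : ℕ) : List Bool := (Fib k).tail

/-- s is the longest Nyldon proper suffix of w. -/
def IsLnps (w s : List Bool) : Prop :=
  s <:+ w ∧ s ≠ w ∧ Nyldon s ∧
    ∀ t : List Bool, t <:+ w → t ≠ w → Nyldon t → t.length ≤ s.length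

/-- Thue-Morse morphism: τ(a)=ab, τ(b)=ba. -/
def tau (w : List Bool) : List Bool :=
  w.flatMap (fun c => if c then [true, false] else [false, true])

/-- The sequence w_n: w_1=a, w_2=b, w_3=ba, w_4=baabbaa,
w_n = b·TM_{2n-8}·comp(TM_{2n-6})·comp(TM_{2n-6})' for n ≥ 5. -/
def wseq : ℕ → List Bool
  | 0 => []
  | 1 => [false]
  | 2 => [true]
  | 3 => [true, false]
  | 4 => [true, false, false, true, true, false, false]
  | (n+5) => true :: (TM (2*n+2) ++ comp (TM (2*n+4)) ++ (comp (TM (2*n+4))).dropLast)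

/-- The twelve words t_i(k). -/
def tword : ℕ → ℕ → List Bool
  | 1, k => true :: (TM (2*k+1)).dropLast
  | 2, k => true :: TM (2*k+1)
  | 3, k => true :: (TM (2*k+1) ++ (comp (TM (2*k))).dropLast)
  | 4, k => true :: TM (2*k)
  | 5, k => true :: (TM (2*k) ++ TM (2*k-1) ++ (comp (TM (2*k-2))).dropLast)
  | 6, k => true :: (TM (2*k) ++ (TM (2*k+1)).dropLast)
  | 7, k => true :: (TM (2*k) ++ TM (2*k+1))
  | 8, k => true :: (TM (2*k) ++ TM (2*k+1) ++ (comp (TM (2*k))).dropLast)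
  | 9, k => true :: (TM (2*k) ++ (comp (TM (2*k+2))).dropLast)
  | 10, k => true :: (TM (2*k) ++ comp (TM (2*k+2)))
  | 11, k => true :: (TM (2*k) ++ TM (2*k+1) ++ (comp (TM (2*k+2))).dropLast)
  | 12, k => true :: (TM (2*k) ++ comp (TM (2*k+2)) ++ (comp (TM (2*k+2))).dropLast)
  | _, _ => []

lemma tau_append (u v : List Bool) : tau (u ++ v) = tau u ++ tau v := by
  simp [tau]

lemma tau_comp (w : List Bool) : tau (comp w) = comp (tau w) := by
  induction w with
  | nil => simp [tau, comp]
  | cons c t ih =>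
    cases c <;> simp [tau, comp] at ih ⊢ <;> exact ih

lemma tau_TM (k : ℕ) : tau (TM k) = TM (k+1) := by
  induction k with
  | zero => rfl
  | succ k ih =>
    show tau (TM k ++ comp (TM k)) = TM (k+1) ++ comp (TM (k+1))
    rw [tau_append, tau_comp, ih]

lemma comp_append (u v : List Bool) : comp (u ++ v) = comp u ++ comp v := by
  simp [comp]

lemma comp_comp (w : List Bool) : comp (comp w) = w := by
  simp [comp, Function.comp_def, Bool.not_not]

lemma TM_even (k : ℕ) : ∃ u, TM (2*k) = u ++ [false] := by
  induction k with
  | zero => exact ⟨[], rfl⟩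
  | succ k ih =>
    obtain ⟨u, hu⟩ := ih
    refine ⟨TM (2*k) ++ comp (TM (2*k)) ++ comp (TM (2*k)) ++ u, ?_⟩
    have h1 : 2 * (k+1) = (2*k+1) + 1 := by ring
    rw [h1]
    show TM (2*k+1) ++ comp (TM (2*k+1)) = _
    show (TM (2*k) ++ comp (TM (2*k))) ++ comp (TM (2*k) ++ comp (TM (2*k))) = _
    rw [comp_append, comp_comp, hu]
    simp [comp_append, comp]

lemma tau2_append (u v : List Bool) :
    tau (tau (u ++ v)) = tau (tau u) ++ tau (tau v) := by
  rw [tau_append, tau_append]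

theorem stmt15 : ∀ n : ℕ, 5 ≤ n →
    [true, false, false] <+: tau (tau (wseq n)) ∧
    wseq (n+1) = (tau (tau (wseq n))).drop 3 ++ [true, false, false] := by
  intro n hn
  obtain ⟨m, rfl⟩ : ∃ m, n = m + 5 := ⟨n - 5, by omega⟩
  -- B = comp (TM (2m+4)) = B'' ++ [true]
  obtain ⟨u, hu⟩ := TM_even (m + 2)
  have h24 : 2 * (m + 2) = 2 * m + 4 := by ring
  rw [h24] at hu
  set B'' : List Bool := comp u with hB''
  have hB : comp (TM (2*m+4)) = B'' ++ [true] := by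
    rw [hu, comp_append]; rfl
  have hBdrop : (comp (TM (2*m+4))).dropLast = B'' := by
    rw [hB, List.dropLast_concat]
  have hw : wseq (m+5)
      = [true] ++ TM (2*m+2) ++ (B'' ++ [true]) ++ B'' := by
    show true :: (TM (2*m+2) ++ comp (TM (2*m+4)) ++ (comp (TM (2*m+4))).dropLast) = _
    rw [hBdrop, hB]; simp
  -- τ² pieces
  have htt : tau (tau [true]) = [true, false, false, true] := rfl
  have hA : tau (tau (TM (2*m+2))) = TM (2*m+4) := by
    rw [tau_TM, tau_TM]
  have hBfull : tau (tau (comp (TM (2*m+4)))) = comp (TM (2*m+6)) := by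
    rw [tau_comp, tau_comp, tau_TM, tau_TM]
  have htau2w : tau (tau (wseq (m+5)))
      = [true, false, false, true] ++ TM (2*m+4)
        ++ (tau (tau B'') ++ [true, false, false, true]) ++ tau (tau B'') := by
    rw [hw, tau2_append, tau2_append, tau2_append, tau2_append, htt, hA]
  have hC : comp (TM (2*m+6)) = tau (tau B'') ++ [true, false, false, true] := by
    rw [← hBfull, hB, tau2_append, htt]
  have hCdrop : (comp (TM (2*m+6))).dropLast
      = tau (tau B'') ++ [true, false, false] := by
    rw [hC]
    have : tau (tau B'') ++ [true, false, false, true]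
        = (tau (tau B'') ++ [true, false, false]) ++ [true] := by simp
    rw [this, List.dropLast_concat]
  constructor
  · rw [htau2w]
    exact ⟨[true] ++ TM (2*m+4) ++ (tau (tau B'') ++ [true, false, false, true])
      ++ tau (tau B''), by simp⟩
  · have hw1 : wseq (m+5+1)
        = true :: (TM (2*m+4) ++ comp (TM (2*m+6)) ++ (comp (TM (2*m+6))).dropLast) := by
      show wseq ((m+1)+5) = _
      show true :: (TM (2*(m+1)+2) ++ comp (TM (2*(m+1)+4)) ++ (comp (TM (2*(m+1)+4))).dropLast) = _
      have e1 : 2*(m+1)+2 = 2*m+4 := by ring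
      have e2 : 2*(m+1)+4 = 2*m+6 := by ring
      rw [e1, e2]
    rw [hw1, hCdrop, hC, htau2w]
    simp
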